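/- arXiv:1901.05752 — 3 statements merged into one kernel-verified Lean document; each statement's English description precedes it below -/
import Mathlib

section
/- Let the problem have Property (P). Then the problem is strongly polynomially tractable if and only if A_* := liminf_{d→∞} ln(h_d^{-1})/ln d > 0. -/
open Filter Real Set

/-- Information complexity: the number of multi-indices `(j₁,…,j_d) ∈ ℕ^d`
(here 0-indexed, so `Λ k j` stands for `λ(k+1, j+1)`) whose eigenvalue product exceeds `ε²`. -/
noncomputable def infoCount (Λ : ℕ → ℕ → ℝ) (d : ℕ) (ε : ℝ) : ℕ :=
  Nat.card {j : Fin d → ℕ | ε ^ 2 < ∏ k : Fin d, Λ k.val (j k)}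

/-- Strong polynomial tractability. -/
def IsSPT (Λ : ℕ → ℕ → ℝ) : Prop :=
  ∃ C p : ℝ, 0 ≤ C ∧ 0 ≤ p ∧ ∀ d : ℕ, 1 ≤ d → ∀ ε : ℝ, ε ∈ Set.Ioo (0 : ℝ) 1 →
    (infoCount Λ d ε : ℝ) ≤ C * ε ^ (-p)

/-- The exponent `p*` of strong polynomial tractability. -/
noncomputable def sptExponent (Λ : ℕ → ℕ → ℝ) : ℝ :=
  sInf {p : ℝ | 0 ≤ p ∧ ∃ C : ℝ, 0 ≤ C ∧ ∀ d : ℕ, 1 ≤ d → ∀ ε : ℝ, ε ∈ Set.Ioo (0 : ℝ) 1 →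
    (infoCount Λ d ε : ℝ) ≤ C * ε ^ (-p)}

/-- Polynomial tractability. -/
def IsPT (Λ : ℕ → ℕ → ℝ) : Prop :=
  ∃ C p q : ℝ, 0 ≤ C ∧ 0 ≤ p ∧ 0 ≤ q ∧ ∀ d : ℕ, 1 ≤ d → ∀ ε : ℝ, ε ∈ Set.Ioo (0 : ℝ) 1 →
    (infoCount Λ d ε : ℝ) ≤ C * (d : ℝ) ^ q * ε ^ (-p)

/-- Quasi-polynomial tractability. -/
def IsQPT (Λ : ℕ → ℕ → ℝ) : Prop :=
  ∃ C t : ℝ, 0 < C ∧ 0 < t ∧ ∀ d : ℕ, 1 ≤ d → ∀ ε : ℝ, ε ∈ Set.Ioo (0 : ℝ) 1 →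
    (infoCount Λ d ε : ℝ) ≤ C * Real.exp (t * (1 + Real.log d) * (1 + Real.log ε⁻¹))

/-- The exponent `t*` of quasi-polynomial tractability. -/
noncomputable def qptExponent (Λ : ℕ → ℕ → ℝ) : ℝ :=
  sInf {t : ℝ | 0 < t ∧ ∃ C : ℝ, 0 < C ∧ ∀ d : ℕ, 1 ≤ d → ∀ ε : ℝ, ε ∈ Set.Ioo (0 : ℝ) 1 →
    (infoCount Λ d ε : ℝ) ≤ C * Real.exp (t * (1 + Real.log d) * (1 + Real.log ε⁻¹))}

/-- The filter describing `ε⁻¹ + d → ∞` over pairs `(ε, d)` with `ε ∈ (0,1)` and `d ≥ 1`. -/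
noncomputable def wtFilter : Filter (ℝ × ℕ) :=
  (Filter.comap (fun p : ℝ × ℕ => p.1⁻¹ + (p.2 : ℝ)) Filter.atTop) ⊓
    Filter.principal {p : ℝ × ℕ | p.1 ∈ Set.Ioo (0 : ℝ) 1 ∧ 1 ≤ p.2}

/-- `(s,t)`-weak tractability: `ln n(ε,d) / (ε^{-s} + d^t) → 0` as `ε⁻¹ + d → ∞`. -/
def IsWT (Λ : ℕ → ℕ → ℝ) (s t : ℝ) : Prop :=
  Filter.Tendsto
    (fun p : ℝ × ℕ => Real.log (infoCount Λ p.2 p.1) / (p.1 ^ (-s) + (p.2 : ℝ) ^ t))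
    wtFilter (nhds 0)

/-- Uniform weak tractability. -/
def IsUWT (Λ : ℕ → ℕ → ℝ) : Prop := ∀ s t : ℝ, 0 < s → 0 < t → IsWT Λ s t

/-- The problem suffers from the curse of dimensionality. -/
def SuffersCurse (Λ : ℕ → ℕ → ℝ) : Prop :=
  ∃ C ε₀ α : ℝ, 0 < C ∧ 0 < ε₀ ∧ 0 < α ∧ ∀ ε : ℝ, 0 < ε → ε ≤ ε₀ →
    {d : ℕ | C * (1 + α) ^ d ≤ (infoCount Λ d ε : ℝ)}.Infinite

/-- Condition (3) of Property (P) for a given `τ > 0`: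
`H(k,τ) = ∑_{j≥2} (λ(k,j)/λ(k,2))^τ` is finite for each `k` and
`sup_k H(k,τ) = H(1,τ)` (equivalently `H(k,τ) ≤ H(1,τ)` for all `k`). -/
def Cond3 (Λ : ℕ → ℕ → ℝ) (τ : ℝ) : Prop :=
  0 < τ ∧ (∀ k, Summable fun j : ℕ => (Λ k (j + 1) / Λ k 1) ^ τ) ∧
    ∀ k, (∑' j : ℕ, (Λ k (j + 1) / Λ k 1) ^ τ) ≤ ∑' j : ℕ, (Λ 0 (j + 1) / Λ 0 1) ^ τ

/-- `τ₀`: the infimum of all `τ` satisfying Condition (3). -/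
noncomputable def tau0 (Λ : ℕ → ℕ → ℝ) : ℝ := sInf {τ : ℝ | Cond3 Λ τ}

/-- Property (P): each sequence `λ(k,·)` is nonincreasing and nonnegative with `λ(k,1) = 1`
and `λ(k,2) > 0`, `h_k = λ(k,2)` is nonincreasing, and Condition (3) holds for some `τ > 0`. -/
structure PropertyP (Λ : ℕ → ℕ → ℝ) : Prop where
  nonneg : ∀ k j, 0 ≤ Λ k j
  anti : ∀ k, Antitone (Λ k)
  first : ∀ k, Λ k 0 = 1
  second_pos : ∀ k, 0 < Λ k 1
  h_anti : Antitone fun k => Λ k 1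
  cond3 : ∃ τ : ℝ, Cond3 Λ τ

section Aux

variable {Λ : ℕ → ℕ → ℝ}

lemma PropertyP.lam_le_one (hP : PropertyP Λ) (k j : ℕ) : Λ k j ≤ 1 := by
  rw [← hP.first k]; exact hP.anti k (Nat.zero_le j)

/-- Each coordinate sequence tends to zero, so the level sets are bounded. -/
lemma PropertyP.exists_bound (hP : PropertyP Λ) {τ : ℝ} (hτ : Cond3 Λ τ) (k : ℕ) {c : ℝ}
    (hc : 0 < c) : ∃ N : ℕ, ∀ n, c < Λ k n → n < N := by
  have hsum := hτ.2.1 k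
  have h0 := hsum.tendsto_atTop_zero
  have hb : 0 < (c / Λ k 1) ^ τ := Real.rpow_pos_of_pos (div_pos hc (hP.second_pos k)) τ
  obtain ⟨N, hN⟩ := eventually_atTop.1 (h0.eventually_lt_const hb)
  refine ⟨N + 1, fun n hn => ?_⟩
  by_contra hcon
  push_neg at hcon
  have hn1 : N ≤ n - 1 := by omega
  have h2 := hN _ hn1
  rw [Nat.sub_add_cancel (by omega : 1 ≤ n)] at h2
  have hle : (c / Λ k 1) ^ τ ≤ (Λ k n / Λ k 1) ^ τ :=
    Real.rpow_le_rpow (le_of_lt (div_pos hc (hP.second_pos k)))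
      ((div_le_div_iff_of_pos_right (hP.second_pos k)).2 hn.le) hτ.1.le
  linarith

/-- The solution set is contained in a finite box. -/
lemma PropertyP.subset_box (hP : PropertyP Λ) {τ : ℝ} (hτ : Cond3 Λ τ) (d : ℕ) {ε : ℝ}
    (hε : 0 < ε) : ∃ N : ℕ → ℕ,
      {j : Fin d → ℕ | ε ^ 2 < ∏ k : Fin d, Λ k.val (j k)} ⊆
        ↑(Fintype.piFinset fun k : Fin d => Finset.range (N k.val)) := by
  have hc : 0 < ε ^ 2 := pow_pos hε 2
  choose N hN using fun k => hP.exists_bound hτ k hc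
  refine ⟨N, fun j hj => ?_⟩
  simp only [Finset.coe_sort_coe, Finset.mem_coe, Fintype.mem_piFinset, Finset.mem_range]
  intro k
  apply hN
  refine lt_of_lt_of_le hj ?_
  calc (∏ m : Fin d, Λ m.val (j m))
      = Λ k.val (j k) * ∏ m ∈ Finset.univ.erase k, Λ m.val (j m) :=
        (Finset.mul_prod_erase Finset.univ _ (Finset.mem_univ k)).symm
    _ ≤ Λ k.val (j k) * 1 := by
        apply mul_le_mul_of_nonneg_left _ (hP.nonneg _ _)
        exact Finset.prod_le_one (fun m _ => hP.nonneg _ _) (fun m _ => hP.lam_le_one _ _)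
    _ = Λ k.val (j k) := mul_one _

lemma PropertyP.solSet_finite (hP : PropertyP Λ) {τ : ℝ} (hτ : Cond3 Λ τ) (d : ℕ) {ε : ℝ}
    (hε : 0 < ε) : {j : Fin d → ℕ | ε ^ 2 < ∏ k : Fin d, Λ k.val (j k)}.Finite := by
  obtain ⟨N, hN⟩ := hP.subset_box hτ d hε
  exact Set.Finite.subset (Finset.finite_toSet _) hN

/-- Bound for the finite partial sums of eigenvalue powers in one coordinate. -/
lemma PropertyP.sum_range_le (hP : PropertyP Λ) {τ : ℝ} (hτ : Cond3 Λ τ) {τ' : ℝ}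
    (hττ' : τ ≤ τ') (k M : ℕ) :
    ∑ n ∈ Finset.range M, Λ k n ^ τ' ≤
      1 + (∑' j : ℕ, (Λ 0 (j + 1) / Λ 0 1) ^ τ) * Λ k 1 ^ τ' := by
  have hτ'0 : 0 < τ' := lt_of_lt_of_le hτ.1 hττ'
  have hk1 : 0 < Λ k 1 := hP.second_pos k
  have step1 : ∑ n ∈ Finset.range M, Λ k n ^ τ' ≤ ∑ n ∈ Finset.range (M + 1), Λ k n ^ τ' :=
    Finset.sum_le_sum_of_subset_of_nonneg (Finset.range_subset_range.2 (Nat.le_succ M))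
      (fun n _ _ => Real.rpow_nonneg (hP.nonneg _ _) _)
  rw [Finset.sum_range_succ'] at step1
  have hf0 : Λ k 0 ^ τ' = 1 := by rw [hP.first k, Real.one_rpow]
  have hratio : ∀ i : ℕ, Λ k (i + 1) ^ τ' = Λ k 1 ^ τ' * (Λ k (i + 1) / Λ k 1) ^ τ' := by
    intro i
    rw [Real.div_rpow (hP.nonneg _ _) hk1.le, mul_div_cancel₀]
    exact ne_of_gt (Real.rpow_pos_of_pos hk1 _)
  have hterm : ∀ i : ℕ, (Λ k (i + 1) / Λ k 1) ^ τ' ≤ (Λ k (i + 1) / Λ k 1) ^ τ := by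
    intro i
    rcases eq_or_lt_of_le (div_nonneg (hP.nonneg k (i + 1)) hk1.le) with h0 | h0
    · rw [← h0, Real.zero_rpow (ne_of_gt hτ'0), Real.zero_rpow (ne_of_gt hτ.1)]
    · exact Real.rpow_le_rpow_of_exponent_ge h0
        (div_le_one_of_le₀ (hP.anti k (by omega)) hk1.le) hττ'
  have hsumratio : ∑ i ∈ Finset.range M, (Λ k (i + 1) / Λ k 1) ^ τ' ≤
      ∑' j : ℕ, (Λ 0 (j + 1) / Λ 0 1) ^ τ := by
    calc ∑ i ∈ Finset.range M, (Λ k (i + 1) / Λ k 1) ^ τ'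
        ≤ ∑ i ∈ Finset.range M, (Λ k (i + 1) / Λ k 1) ^ τ :=
          Finset.sum_le_sum fun i _ => hterm i
      _ ≤ ∑' j : ℕ, (Λ k (j + 1) / Λ k 1) ^ τ :=
          Summable.sum_le_tsum _ (fun i _ => Real.rpow_nonneg
            (div_nonneg (hP.nonneg _ _) hk1.le) _) (hτ.2.1 k)
      _ ≤ ∑' j : ℕ, (Λ 0 (j + 1) / Λ 0 1) ^ τ := hτ.2.2 k
  calc ∑ n ∈ Finset.range M, Λ k n ^ τ'
      ≤ (∑ i ∈ Finset.range M, Λ k (i + 1) ^ τ') + Λ k 0 ^ τ' := step1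
    _ = 1 + Λ k 1 ^ τ' * ∑ i ∈ Finset.range M, (Λ k (i + 1) / Λ k 1) ^ τ' := by
        rw [hf0, add_comm]
        congr 1
        rw [Finset.mul_sum]
        exact Finset.sum_congr rfl fun i _ => hratio i
    _ ≤ 1 + Λ k 1 ^ τ' * (∑' j : ℕ, (Λ 0 (j + 1) / Λ 0 1) ^ τ) := by
        have := mul_le_mul_of_nonneg_left hsumratio (Real.rpow_nonneg hk1.le τ')
        linarith
    _ = 1 + (∑' j : ℕ, (Λ 0 (j + 1) / Λ 0 1) ^ τ) * Λ k 1 ^ τ' := by ring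

/-- The Chebyshev-type upper bound for the information complexity. -/
lemma PropertyP.count_le (hP : PropertyP Λ) {τ : ℝ} (hτ : Cond3 Λ τ) {τ' : ℝ}
    (hττ' : τ ≤ τ') (d : ℕ) {ε : ℝ} (hε0 : 0 < ε) :
    (infoCount Λ d ε : ℝ) ≤ ε ^ (-(2 * τ')) *
      ∏ k : Fin d, (1 + (∑' j : ℕ, (Λ 0 (j + 1) / Λ 0 1) ^ τ) * Λ k.val 1 ^ τ') := by
  have hτ'0 : 0 < τ' := lt_of_lt_of_le hτ.1 hττ'
  obtain ⟨N, hsub⟩ := hP.subset_box hτ d hε0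
  set T := {j : Fin d → ℕ | ε ^ 2 < ∏ k : Fin d, Λ k.val (j k)} with hT
  set P := Fintype.piFinset fun k : Fin d => Finset.range (N k.val) with hPdef
  have hfin : T.Finite := Set.Finite.subset (Finset.finite_toSet _) hsub
  have hcard : (infoCount Λ d ε : ℝ) = (hfin.toFinset.card : ℝ) := by
    rw [infoCount, Nat.card_coe_set_eq, Set.ncard_eq_toFinset_card _ hfin]
  have hFP : hfin.toFinset ⊆ P := by
    intro j hj
    exact hsub (hfin.mem_toFinset.1 hj)
  have hεpow : 0 < ε ^ (-(2 * τ')) := Real.rpow_pos_of_pos hε0 _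
  have key : ∀ j ∈ hfin.toFinset,
      (1 : ℝ) ≤ ε ^ (-(2 * τ')) * ∏ k : Fin d, Λ k.val (j k) ^ τ' := by
    intro j hjF
    have hj : ε ^ 2 < ∏ k : Fin d, Λ k.val (j k) := hfin.mem_toFinset.1 hjF
    have h1 : ε ^ (2 * τ') ≤ ∏ k : Fin d, Λ k.val (j k) ^ τ' := by
      have e1 : ε ^ (2 * τ') = (ε ^ 2 : ℝ) ^ τ' := by
        rw [← Real.rpow_natCast ε 2, ← Real.rpow_mul hε0.le]
        norm_num
      rw [e1, Real.finset_prod_rpow _ _ (fun i _ => hP.nonneg _ _) τ']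
      exact Real.rpow_le_rpow (by positivity) hj.le hτ'0.le
    have h2 : ε ^ (-(2 * τ')) * ε ^ (2 * τ') = 1 := by
      rw [← Real.rpow_add hε0]; simp
    calc (1 : ℝ) = ε ^ (-(2 * τ')) * ε ^ (2 * τ') := h2.symm
      _ ≤ ε ^ (-(2 * τ')) * ∏ k : Fin d, Λ k.val (j k) ^ τ' :=
          mul_le_mul_of_nonneg_left h1 hεpow.le
  rw [hcard]
  calc (hfin.toFinset.card : ℝ)
      = ∑ _j ∈ hfin.toFinset, (1 : ℝ) := by simp
    _ ≤ ∑ j ∈ hfin.toFinset, ε ^ (-(2 * τ')) * ∏ k : Fin d, Λ k.val (j k) ^ τ' :=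
        Finset.sum_le_sum key
    _ = ε ^ (-(2 * τ')) * ∑ j ∈ hfin.toFinset, ∏ k : Fin d, Λ k.val (j k) ^ τ' := by
        rw [← Finset.mul_sum]
    _ ≤ ε ^ (-(2 * τ')) * ∑ j ∈ P, ∏ k : Fin d, Λ k.val (j k) ^ τ' := by
        apply mul_le_mul_of_nonneg_left _ hεpow.le
        apply Finset.sum_le_sum_of_subset_of_nonneg hFP
        intro j _ _
        exact Finset.prod_nonneg fun k _ => Real.rpow_nonneg (hP.nonneg _ _) _
    _ = ε ^ (-(2 * τ')) * ∏ k : Fin d, ∑ n ∈ Finset.range (N k.val), Λ k.val n ^ τ' := by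
        rw [Finset.prod_univ_sum]
    _ ≤ ε ^ (-(2 * τ')) *
        ∏ k : Fin d, (1 + (∑' j : ℕ, (Λ 0 (j + 1) / Λ 0 1) ^ τ) * Λ k.val 1 ^ τ') := by
        apply mul_le_mul_of_nonneg_left _ hεpow.le
        apply Finset.prod_le_prod
        · intro k _
          exact Finset.sum_nonneg fun n _ => Real.rpow_nonneg (hP.nonneg _ _) _
        · intro k _
          exact hP.sum_range_le hτ hττ' k.val (N k.val)

/-- Lower bound: the information complexity is at least `d` when `ε² < h_{d-1}`. -/
lemma PropertyP.le_count (hP : PropertyP Λ) (d : ℕ) (hd : 1 ≤ d) {ε : ℝ}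
    (hε0 : 0 < ε) (hε : ε ^ 2 < Λ (d - 1) 1) : (d : ℝ) ≤ (infoCount Λ d ε : ℝ) := by
  obtain ⟨τ, hτ⟩ := hP.cond3
  set T := {j : Fin d → ℕ | ε ^ 2 < ∏ k : Fin d, Λ k.val (j k)} with hT
  have hfin : T.Finite := hP.solSet_finite hτ d hε0
  have : Finite ↑T := hfin.to_subtype
  have hmem : ∀ i : Fin d, (fun m : Fin d => if m = i then 1 else 0) ∈ T := by
    intro i
    have hprod : (∏ m : Fin d, Λ m.val (if m = i then 1 else 0)) = Λ i.val 1 := by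
      rw [Finset.prod_eq_single i (fun b _ hb => by rw [if_neg hb, hP.first])
        (fun h => absurd (Finset.mem_univ i) h), if_pos rfl]
    have : ε ^ 2 < Λ i.val 1 :=
      lt_of_lt_of_le hε (hP.h_anti (by omega : i.val ≤ d - 1))
    simpa [hT, hprod] using this
  let f : Fin d → ↑T := fun i => ⟨fun m => if m = i then 1 else 0, hmem i⟩
  have hinj : Function.Injective f := by
    intro i j hij
    by_contra hne
    have := congrFun (Subtype.mk_eq_mk.1 hij) i
    simp [if_neg hne] at this
  have := Nat.card_le_card_of_injective f hinj
  rw [Nat.card_eq_fintype_card, Fintype.card_fin] at this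
  exact_mod_cast this

end Aux

/-- Under Property (P), the problem is strongly polynomially tractable iff
`A_* = liminf_{d→∞} ln(h_d⁻¹)/ln d > 0`. -/
theorem spt_iff_liminf_pos (Λ : ℕ → ℕ → ℝ) (hP : PropertyP Λ) :
    IsSPT Λ ↔
      0 < Filter.liminf
        (fun k : ℕ => (Real.log (Λ k 1)⁻¹ / Real.log ((k : ℝ) + 1) : EReal))
        Filter.atTop := by
  constructor
  · -- SPT → liminf > 0
    intro hSPT
    by_contra hneg
    push_neg at hneg
    obtain ⟨C, p, hC, hp, hbound⟩ := hSPT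
    set δ : ℝ := 1 / (p + 1) with hδdef
    have hp1 : (0:ℝ) < p + 1 := by linarith
    have hδ : 0 < δ := by positivity
    have hlt : Filter.liminf
        (fun k : ℕ => (Real.log (Λ k 1)⁻¹ / Real.log ((k : ℝ) + 1) : EReal))
        Filter.atTop < (δ : EReal) :=
      lt_of_le_of_lt hneg (by exact_mod_cast hδ)
    have hfreq := frequently_lt_of_liminf_lt (u := fun k : ℕ =>
      (Real.log (Λ k 1)⁻¹ / Real.log ((k : ℝ) + 1) : EReal)) (f := Filter.atTop)
      (by isBoundedDefault) hlt
    set M : ℝ := C * (2:ℝ) ^ (p:ℝ) with hMdef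
    have hM0 : 0 ≤ M := by positivity
    obtain ⟨k, hk, hklt⟩ := (frequently_atTop.1 hfreq) (max 1 (⌈M ^ 2⌉₊ + 1))
    have hk1 : 1 ≤ k := le_trans (le_max_left _ _) hk
    have hkM : M ^ 2 < (k:ℝ) := by
      have h1 : ⌈M ^ 2⌉₊ + 1 ≤ k := le_trans (le_max_right _ _) hk
      calc M ^ 2 ≤ (⌈M ^ 2⌉₊ : ℝ) := Nat.le_ceil _
        _ < (k:ℝ) := by exact_mod_cast Nat.lt_of_lt_of_le (Nat.lt_succ_self _) h1
    have hreal : Real.log (Λ k 1)⁻¹ / Real.log ((k:ℝ)+1) < δ := EReal.coe_lt_coe_iff.1 hklt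
    have hkcast : (1:ℝ) ≤ (k:ℝ) := by exact_mod_cast hk1
    have hL : 0 < Real.log ((k:ℝ)+1) := Real.log_pos (by linarith)
    have hh : 0 < Λ k 1 := hP.second_pos k
    have hhk : ((k:ℝ)+1) ^ (-δ) < Λ k 1 := by
      have h3 : Real.log (Λ k 1)⁻¹ < δ * Real.log ((k:ℝ)+1) := (div_lt_iff₀ hL).1 hreal
      rw [Real.log_inv] at h3
      calc ((k:ℝ)+1) ^ (-δ) = Real.exp (Real.log ((k:ℝ)+1) * (-δ)) :=
            Real.rpow_def_of_pos (by linarith) _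
        _ < Real.exp (Real.log (Λ k 1)) := Real.exp_lt_exp.2 (by linarith)
        _ = Λ k 1 := Real.exp_log hh
    set ε : ℝ := Real.sqrt (Λ k 1) / 2 with hεdef
    have hsqrtpos : 0 < Real.sqrt (Λ k 1) := Real.sqrt_pos.2 hh
    have hε0 : 0 < ε := by positivity
    have hsqle : Real.sqrt (Λ k 1) ≤ 1 := by
      rw [show (1:ℝ) = Real.sqrt 1 by simp]
      exact Real.sqrt_le_sqrt (hP.lam_le_one k 1)
    have hε1 : ε < 1 := by rw [hεdef]; linarith
    have hε2 : ε ^ 2 = Λ k 1 / 4 := by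
      rw [hεdef, div_pow, Real.sq_sqrt hh.le]; norm_num
    have hdlt : ε ^ 2 < Λ ((k+1) - 1) 1 := by
      simp only [Nat.add_sub_cancel]
      rw [hε2]; linarith
    have hlow := hP.le_count (k+1) (by omega) hε0 hdlt
    have hup := hbound (k+1) (by omega) ε ⟨hε0, hε1⟩
    -- bound ε ^ (-p)
    have hsqrtlow : ((k:ℝ)+1) ^ (-(δ/2)) ≤ Real.sqrt (Λ k 1) := by
      have h1 : Real.sqrt (((k:ℝ)+1) ^ (-δ)) ≤ Real.sqrt (Λ k 1) := Real.sqrt_le_sqrt hhk.le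
      rw [Real.sqrt_eq_rpow, ← Real.rpow_mul (by linarith)] at h1
      convert h1 using 2
      ring
    have hinvle : (Real.sqrt (Λ k 1))⁻¹ ≤ ((k:ℝ)+1) ^ (δ/2) := by
      have h1 : (Real.sqrt (Λ k 1))⁻¹ ≤ (((k:ℝ)+1) ^ (-(δ/2)))⁻¹ :=
        inv_anti₀ (Real.rpow_pos_of_pos (by linarith) _) hsqrtlow
      rwa [← Real.rpow_neg (by linarith), neg_neg] at h1
    have hεp : ε ^ (-p) ≤ (2:ℝ) ^ (p:ℝ) * Real.sqrt ((k:ℝ)+1) := by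
      have he1 : ε ^ (-p) = (ε⁻¹) ^ p := by
        rw [Real.rpow_neg hε0.le, ← Real.inv_rpow hε0.le]
      have he2 : ε⁻¹ = 2 * (Real.sqrt (Λ k 1))⁻¹ := by
        rw [hεdef, inv_div]
        ring
      have hexp : δ / 2 * p ≤ 1 / 2 := by
        have hple : p / (p+1) ≤ 1 := div_le_one_of_le₀ (by linarith) hp1.le
        calc δ / 2 * p = (p / (p+1)) / 2 := by rw [hδdef]; ring
          _ ≤ 1 / 2 := by linarith
      calc ε ^ (-p) = (2 * (Real.sqrt (Λ k 1))⁻¹) ^ p := by rw [he1, he2]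
        _ = (2:ℝ) ^ (p:ℝ) * ((Real.sqrt (Λ k 1))⁻¹) ^ p :=
            Real.mul_rpow (by norm_num) (by positivity)
        _ ≤ (2:ℝ) ^ (p:ℝ) * (((k:ℝ)+1) ^ (δ/2)) ^ p := by
            apply mul_le_mul_of_nonneg_left _ (by positivity)
            exact Real.rpow_le_rpow (by positivity) hinvle hp
        _ = (2:ℝ) ^ (p:ℝ) * ((k:ℝ)+1) ^ (δ/2*p) := by
            rw [← Real.rpow_mul (by linarith)]
        _ ≤ (2:ℝ) ^ (p:ℝ) * ((k:ℝ)+1) ^ ((1:ℝ)/2) := by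
            apply mul_le_mul_of_nonneg_left _ (by positivity)
            exact Real.rpow_le_rpow_of_exponent_le (by linarith) hexp
        _ = (2:ℝ) ^ (p:ℝ) * Real.sqrt ((k:ℝ)+1) := by rw [Real.sqrt_eq_rpow]
    set s : ℝ := Real.sqrt ((k:ℝ)+1) with hsdef
    have hs0 : 0 < s := Real.sqrt_pos.2 (by linarith)
    have hs2 : s ^ 2 = (k:ℝ) + 1 := Real.sq_sqrt (by linarith)
    have hchain : s ^ 2 ≤ M * s := by
      calc s ^ 2 = ((k+1 : ℕ) : ℝ) := by rw [hs2]; push_cast; ring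
        _ ≤ (infoCount Λ (k+1) ε : ℝ) := hlow
        _ ≤ C * ε ^ (-p) := hup
        _ ≤ C * ((2:ℝ) ^ (p:ℝ) * s) := by
            apply mul_le_mul_of_nonneg_left _ hC
            exact hεp
        _ = M * s := by rw [hMdef]; ring
    have hsM : s ≤ M := by
      have h := hchain
      rw [pow_two] at h
      exact le_of_mul_le_mul_right h hs0
    have hfin2 : (k:ℝ) + 1 ≤ M ^ 2 := by
      rw [← hs2]
      exact pow_le_pow_left₀ hs0.le hsM 2
    linarith
  · -- liminf > 0 → SPT
    intro hpos
    obtain ⟨a, ha0E, halim⟩ := EReal.lt_iff_exists_real_btwn.1 hpos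
    have ha0 : 0 < a := by exact_mod_cast ha0E
    obtain ⟨K0, hK0⟩ := eventually_atTop.1 (eventually_lt_of_lt_liminf halim)
    set K := max K0 1 with hKdef
    obtain ⟨τ, hτ⟩ := hP.cond3
    set τ' : ℝ := max τ (2 / a) with hτ'def
    have hττ' : τ ≤ τ' := le_max_left _ _
    have hτ'0 : 0 < τ' := lt_of_lt_of_le hτ.1 hττ'
    have haτ' : 2 ≤ a * τ' := by
      calc (2:ℝ) = a * (2/a) := by field_simp
        _ ≤ a * τ' := mul_le_mul_of_nonneg_left (le_max_right _ _) ha0.le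
    set B : ℝ := ∑' j : ℕ, (Λ 0 (j + 1) / Λ 0 1) ^ τ with hBdef
    have hB0 : 0 ≤ B := tsum_nonneg fun j =>
      Real.rpow_nonneg (div_nonneg (hP.nonneg _ _) (hP.second_pos 0).le) _
    have hdecay : ∀ k, K ≤ k → Λ k 1 < ((k:ℝ)+1) ^ (-a) := by
      intro k hk
      have h1 := hK0 k (le_trans (le_max_left _ _) hk)
      have h2 : a < Real.log (Λ k 1)⁻¹ / Real.log ((k:ℝ)+1) := EReal.coe_lt_coe_iff.1 h1
      have hk1 : 1 ≤ k := le_trans (le_max_right _ _) hk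
      have hkcast : (1:ℝ) ≤ (k:ℝ) := by exact_mod_cast hk1
      have hL : 0 < Real.log ((k:ℝ)+1) := Real.log_pos (by linarith)
      have h3 : a * Real.log ((k:ℝ)+1) < Real.log (Λ k 1)⁻¹ := (lt_div_iff₀ hL).1 h2
      rw [Real.log_inv] at h3
      have hh : 0 < Λ k 1 := hP.second_pos k
      calc Λ k 1 = Real.exp (Real.log (Λ k 1)) := (Real.exp_log hh).symm
        _ < Real.exp (Real.log ((k:ℝ)+1) * (-a)) := Real.exp_lt_exp.2 (by linarith)
        _ = ((k:ℝ)+1) ^ (-a) := (Real.rpow_def_of_pos (by linarith) _).symm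
    have hZsum : Summable (fun k : ℕ => 1 / ((k:ℝ)+1) ^ 2) := by
      have h1 : Summable (fun n : ℕ => 1 / (n:ℝ) ^ 2) :=
        Real.summable_one_div_nat_pow.2 (by norm_num)
      have h2 := (summable_nat_add_iff 1).2 h1
      apply h2.congr
      intro n
      push_cast
      ring
    set Z : ℝ := ∑' k : ℕ, 1 / ((k:ℝ)+1) ^ 2 with hZdef
    have hterm : ∀ k : ℕ, Λ k 1 ^ τ' ≤ (if k < K then (1:ℝ) else 0) + 1 / ((k:ℝ)+1) ^ 2 := by
      intro k
      by_cases hk : k < K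
      · rw [if_pos hk]
        have h1 : Λ k 1 ^ τ' ≤ 1 :=
          Real.rpow_le_one (hP.second_pos k).le (hP.lam_le_one k 1) hτ'0.le
        have h2 : 0 ≤ 1 / ((k:ℝ)+1) ^ 2 := by positivity
        linarith
      · rw [if_neg hk, zero_add]
        push_neg at hk
        have hdk := hdecay k hk
        have hkc : (0:ℝ) ≤ (k:ℝ) := Nat.cast_nonneg k
        calc Λ k 1 ^ τ' ≤ (((k:ℝ)+1) ^ (-a)) ^ τ' :=
            Real.rpow_le_rpow (hP.second_pos k).le hdk.le hτ'0.le
          _ = ((k:ℝ)+1) ^ (-a * τ') := by rw [← Real.rpow_mul (by linarith)]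
          _ ≤ ((k:ℝ)+1) ^ (-(2:ℝ)) :=
              Real.rpow_le_rpow_of_exponent_le (by linarith) (by linarith)
          _ = 1 / ((k:ℝ)+1) ^ 2 := by
              rw [Real.rpow_neg (by linarith), one_div]
              congr 1
              rw [show ((2:ℝ)) = ((2:ℕ):ℝ) by norm_num, Real.rpow_natCast]
    have hsumbound : ∀ d : ℕ, ∑ k ∈ Finset.range d, Λ k 1 ^ τ' ≤ (K:ℝ) + Z := by
      intro d
      calc ∑ k ∈ Finset.range d, Λ k 1 ^ τ'
          ≤ ∑ k ∈ Finset.range d, ((if k < K then (1:ℝ) else 0) + 1 / ((k:ℝ)+1) ^ 2) :=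
            Finset.sum_le_sum fun k _ => hterm k
        _ = (∑ k ∈ Finset.range d, (if k < K then (1:ℝ) else 0)) +
            ∑ k ∈ Finset.range d, 1 / ((k:ℝ)+1) ^ 2 := Finset.sum_add_distrib
        _ ≤ (K:ℝ) + Z := by
            apply add_le_add
            · rw [Finset.sum_boole]
              have hsub : (Finset.range d).filter (· < K) ⊆ Finset.range K := by
                intro x hx
                simp only [Finset.mem_filter, Finset.mem_range] at hx ⊢
                exact hx.2
              have := Finset.card_le_card hsub
              rw [Finset.card_range] at this
              exact_mod_cast this
            · exact Summable.sum_le_tsum _ (fun k _ => by positivity) hZsum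
    refine ⟨Real.exp (B * ((K:ℝ) + Z)), 2 * τ', (Real.exp_pos _).le, by linarith, ?_⟩
    intro d hd ε hε
    have hcount := hP.count_le hτ hττ' d hε.1
    have hεpow : (0:ℝ) < ε ^ (-(2 * τ')) := Real.rpow_pos_of_pos hε.1 _
    have hprod : ∏ k : Fin d, (1 + B * Λ k.val 1 ^ τ') ≤ Real.exp (B * ((K:ℝ)+Z)) := by
      calc ∏ k : Fin d, (1 + B * Λ k.val 1 ^ τ')
          ≤ ∏ k : Fin d, Real.exp (B * Λ k.val 1 ^ τ') := by
            apply Finset.prod_le_prod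
            · intro k _
              have : 0 ≤ B * Λ k.val 1 ^ τ' := mul_nonneg hB0 (Real.rpow_nonneg (hP.nonneg _ _) _)
              linarith
            · intro k _
              linarith [Real.add_one_le_exp (B * Λ k.val 1 ^ τ')]
        _ = Real.exp (∑ k : Fin d, B * Λ k.val 1 ^ τ') := (Real.exp_sum _ _).symm
        _ ≤ Real.exp (B * ((K:ℝ)+Z)) := by
            apply Real.exp_le_exp.2
            rw [← Finset.mul_sum]
            apply mul_le_mul_of_nonneg_left _ hB0
            rw [Fin.sum_univ_eq_sum_range (fun k => Λ k 1 ^ τ')]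
            exact hsumbound d
    calc (infoCount Λ d ε : ℝ)
        ≤ ε ^ (-(2 * τ')) * ∏ k : Fin d, (1 + B * Λ k.val 1 ^ τ') := hcount
      _ ≤ ε ^ (-(2 * τ')) * Real.exp (B * ((K:ℝ)+Z)) :=
          mul_le_mul_of_nonneg_left hprod hεpow.le
      _ = Real.exp (B * ((K:ℝ) + Z)) * ε ^ (-(2 * τ')) := mul_comm _ _
end

section
/- Let the problem have Property (P). Then for every s > 0 and every t > 1 the problem is (s,t)-weakly tractable. -/
open Filter Real Set

lemma sqrtb (δ y : ℝ) (hδ : 0 < δ) (hy : 0 ≤ y) : Real.sqrt y ≤ δ * y + 1/(4*δ) := by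
  have h2 := Real.sq_sqrt hy
  set u := Real.sqrt y with hu
  have h1 := sq_nonneg (u - 1/(2*δ))
  have h4 := mul_nonneg hδ.le h1
  have h7 : δ * (u - 1/(2*δ))^2 = δ * u^2 - u + 1/(4*δ) := by
    field_simp; ring
  rw [h7, h2] at h4
  linarith

lemma auxLogB (δ s : ℝ) (hδ : 0 < δ) (hs : 0 < s) :
    ∃ K : ℝ, 0 ≤ K ∧ ∀ x : ℝ, 1 ≤ x → Real.log x ≤ K + δ * x ^ s := by
  set δ' := s * δ / 2 with hδ'
  have hδ'p : 0 < δ' := by positivity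
  refine ⟨(2/s) * (1/(4*δ')), by positivity, fun x hx => ?_⟩
  have hx0 : (0:ℝ) < x := lt_of_lt_of_le one_pos hx
  have hy0 : (0:ℝ) ≤ x ^ s := by positivity
  have hlog : Real.log x = (1/s) * Real.log (x ^ s) := by
    rw [Real.log_rpow hx0]; field_simp
  have h1 : Real.log (x ^ s) ≤ 2 * Real.sqrt (x ^ s) := by
    have := Real.log_le_sub_one_of_pos (x := Real.sqrt (x ^ s)) (by positivity)
    rw [Real.log_sqrt hy0] at this
    nlinarith [Real.sqrt_nonneg (x ^ s)]
  have h2 := sqrtb δ' (x ^ s) hδ'p hy0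
  rw [hlog]
  have h3 : (1/s) * Real.log (x ^ s) ≤ (1/s) * (2 * (δ' * x ^ s + 1/(4*δ'))) := by
    apply mul_le_mul_of_nonneg_left _ (by positivity)
    nlinarith
  refine h3.trans (le_of_eq ?_)
  rw [hδ']; field_simp; ring

lemma auxPolyB (δ t : ℝ) (hδ : 0 < δ) (ht : 1 < t) :
    ∃ K : ℝ, 0 ≤ K ∧ ∀ y : ℝ, 1 ≤ y → y ≤ K + δ * y ^ t := by
  set K := (1/δ) ^ (1/(t-1)) with hK
  have ht1 : (0:ℝ) < t - 1 := by linarith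
  refine ⟨K, by positivity, fun y hy => ?_⟩
  have hy0 : (0:ℝ) < y := lt_of_lt_of_le one_pos hy
  rcases le_or_gt y K with h | h
  · have : (0:ℝ) ≤ δ * y ^ t := by positivity
    linarith
  · have hK0 : (0:ℝ) ≤ K := by positivity
    have h1 : K ^ (t-1) ≤ y ^ (t-1) := Real.rpow_le_rpow hK0 h.le ht1.le
    have h2 : K ^ (t-1) = 1/δ := by
      rw [hK, ← Real.rpow_mul (by positivity), one_div_mul_cancel ht1.ne', Real.rpow_one]
    have h3 : 1 ≤ δ * y ^ (t-1) := by
      rw [h2] at h1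
      calc (1:ℝ) = δ * (1/δ) := by field_simp
        _ ≤ δ * y ^ (t-1) := mul_le_mul_of_nonneg_left h1 hδ.le
    have h4 : y ^ t = y ^ (t-1) * y := by
      rw [← Real.rpow_add_one hy0.ne' (t-1)]; ring_nf
    have : y = 1 * y := (one_mul y).symm
    calc y = 1 * y := (one_mul y).symm
      _ ≤ (δ * y ^ (t-1)) * y := by
          apply mul_le_mul_of_nonneg_right h3 hy0.le
      _ = δ * y ^ t := by rw [h4]; ring
      _ ≤ K + δ * y ^ t := by linarith


section
variable {Λ : ℕ → ℕ → ℝ} {τ : ℝ}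

lemma tail_eq (hP : PropertyP Λ) (hτ : Cond3 Λ τ) (k : ℕ) :
    ∀ j : ℕ, Λ k (j+1) ^ τ = (Λ k (j+1) / Λ k 1) ^ τ * (Λ k 1) ^ τ := by
  intro j
  rw [Real.div_rpow (hP.nonneg k (j+1)) (hP.second_pos k).le,
    div_mul_cancel₀]
  exact (Real.rpow_pos_of_pos (hP.second_pos k) τ).ne'

lemma tail_summable (hP : PropertyP Λ) (hτ : Cond3 Λ τ) (k : ℕ) :
    Summable (fun j : ℕ => Λ k (j+1) ^ τ) := by
  have := (hτ.2.1 k).mul_right ((Λ k 1) ^ τ)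
  simpa only [← tail_eq hP hτ k] using this

lemma tail_tsum_le (hP : PropertyP Λ) (hτ : Cond3 Λ τ) (k : ℕ) :
    (∑' j : ℕ, Λ k (j+1) ^ τ) ≤ ∑' j : ℕ, (Λ 0 (j + 1) / Λ 0 1) ^ τ := by
  have h1 : (∑' j : ℕ, Λ k (j+1) ^ τ)
      = (∑' j : ℕ, (Λ k (j + 1) / Λ k 1) ^ τ) * (Λ k 1) ^ τ := by
    rw [← tsum_mul_right]
    exact tsum_congr (tail_eq hP hτ k)
  rw [h1]
  have hh1 : Λ k 1 ≤ 1 := by rw [← hP.first k]; exact hP.anti k (by norm_num)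
  have hhp : (0:ℝ) < (Λ k 1) ^ τ := Real.rpow_pos_of_pos (hP.second_pos k) τ
  have hh2 : (Λ k 1) ^ τ ≤ 1 := Real.rpow_le_one (hP.second_pos k).le hh1 hτ.1.le
  have hS : 0 ≤ ∑' j : ℕ, (Λ k (j + 1) / Λ k 1) ^ τ :=
    tsum_nonneg fun j => Real.rpow_nonneg (div_nonneg (hP.nonneg k (j+1)) (hP.second_pos k).le) τ
  calc (∑' j : ℕ, (Λ k (j + 1) / Λ k 1) ^ τ) * (Λ k 1) ^ τ
      ≤ (∑' j : ℕ, (Λ k (j + 1) / Λ k 1) ^ τ) * 1 := by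
        exact mul_le_mul_of_nonneg_left hh2 hS
    _ = ∑' j : ℕ, (Λ k (j + 1) / Λ k 1) ^ τ := mul_one _
    _ ≤ _ := hτ.2.2 k

lemma finsum_le (hP : PropertyP Λ) (hτ : Cond3 Λ τ) (k : ℕ) (T : Finset ℕ) :
    ∑ j ∈ T, Λ k j ^ τ ≤ 1 + ∑' j : ℕ, (Λ 0 (j + 1) / Λ 0 1) ^ τ := by
  set M := T.sup id with hM
  have hsub : T ⊆ Finset.range (M+1) := by
    intro j hj
    rw [Finset.mem_range]
    exact Nat.lt_succ_of_le (Finset.le_sup (f := id) hj)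
  have h1 : ∑ j ∈ T, Λ k j ^ τ ≤ ∑ j ∈ Finset.range (M+1), Λ k j ^ τ :=
    Finset.sum_le_sum_of_subset_of_nonneg hsub
      (fun j _ _ => Real.rpow_nonneg (hP.nonneg k j) τ)
  have h2 : ∑ j ∈ Finset.range (M+1), Λ k j ^ τ
      = (∑ j ∈ Finset.range M, Λ k (j+1) ^ τ) + Λ k 0 ^ τ := Finset.sum_range_succ' _ _
  have h3 : ∑ j ∈ Finset.range M, Λ k (j+1) ^ τ ≤ ∑' j : ℕ, Λ k (j+1) ^ τ :=
    Summable.sum_le_tsum _ (fun j _ => Real.rpow_nonneg (hP.nonneg k _) τ) (tail_summable hP hτ k)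
  have h4 : Λ k 0 ^ τ = 1 := by rw [hP.first k, Real.one_rpow]
  have := tail_tsum_le hP hτ k
  rw [h4] at h2
  linarith

end

section
variable {Λ : ℕ → ℕ → ℝ} {τ : ℝ}

lemma exists_N (hP : PropertyP Λ) (hτ : Cond3 Λ τ) (k : ℕ) {c : ℝ} (hc : 0 < c) :
    ∃ N : ℕ, ∀ m, N ≤ m → Λ k m ≤ c := by
  have h0 := (tail_summable hP hτ k).tendsto_atTop_zero
  have hcτ : (0:ℝ) < c ^ τ := Real.rpow_pos_of_pos hc τ
  obtain ⟨j, hj⟩ := (h0.eventually_lt_const hcτ).exists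
  refine ⟨j+1, fun m hm => ?_⟩
  have h1 : Λ k m ≤ Λ k (j+1) := hP.anti k hm
  by_contra h
  push_neg at h
  have : c ^ τ ≤ (Λ k (j+1)) ^ τ := Real.rpow_le_rpow hc.le (h.le.trans h1) hτ.1.le
  linarith

lemma count_bound (hP : PropertyP Λ) (hτ : Cond3 Λ τ)
    (d : ℕ) {ε : ℝ} (hε : ε ∈ Set.Ioo (0:ℝ) 1) :
    (infoCount Λ d ε : ℝ) * (ε^2) ^ τ ≤ (1 + ∑' j : ℕ, (Λ 0 (j + 1) / Λ 0 1) ^ τ) ^ d := by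
  obtain ⟨hε0, hε1⟩ := hε
  have hc : (0:ℝ) < ε^2 := by positivity
  choose N hN using fun k : Fin d => exists_N hP hτ k.val hc
  set S := {j : Fin d → ℕ | ε ^ 2 < ∏ k : Fin d, Λ k.val (j k)} with hSdef
  set T := Fintype.piFinset (fun k : Fin d => Finset.range (N k)) with hT
  have hmem : ∀ j ∈ S, ∀ k : Fin d, ε^2 < Λ k.val (j k) := by
    intro j hj k
    have hone : ∏ k' ∈ Finset.univ.erase k, Λ k'.val (j k') ≤ 1 :=
      Finset.prod_le_one (fun k' _ => hP.nonneg _ _)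
        (fun k' _ => by rw [← hP.first k'.val]; exact hP.anti k'.val (Nat.zero_le _))
    have hprod : ∏ k' : Fin d, Λ k'.val (j k') ≤ Λ k.val (j k) := by
      rw [← Finset.mul_prod_erase Finset.univ _ (Finset.mem_univ k)]
      nlinarith [hP.nonneg k.val (j k)]
    exact lt_of_lt_of_le hj hprod
  have hsub : S ⊆ ↑T := by
    intro j hj
    simp only [hT, Finset.mem_coe, Fintype.mem_piFinset, Finset.mem_range]
    intro k
    by_contra h
    push_neg at h
    exact absurd (hmem j hj k) (not_lt.mpr (hN k _ h))
  have hfin : S.Finite := T.finite_toSet.subset hsub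
  have hcard : (infoCount Λ d ε : ℕ) = hfin.toFinset.card := by
    rw [infoCount, Nat.card_coe_set_eq, Set.ncard_eq_toFinset_card _ hfin]
  set F := hfin.toFinset with hF
  have hFsub : F ⊆ T := fun j hj => hsub (hfin.mem_toFinset.mp hj)
  have step1 : (F.card : ℝ) * (ε^2)^τ ≤ ∑ j ∈ F, ∏ k : Fin d, Λ k.val (j k) ^ τ := by
    have : (F.card : ℝ) * (ε^2)^τ = ∑ _j ∈ F, (ε^2)^τ := by
      rw [Finset.sum_const, nsmul_eq_mul]
    rw [this]
    refine Finset.sum_le_sum fun j hj => ?_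
    have hjS : j ∈ S := hfin.mem_toFinset.mp hj
    rw [Real.finset_prod_rpow _ _ (fun k _ => hP.nonneg _ _) τ]
    exact Real.rpow_le_rpow hc.le (le_of_lt hjS) hτ.1.le
  have step2 : ∑ j ∈ F, ∏ k : Fin d, Λ k.val (j k) ^ τ
      ≤ ∑ j ∈ T, ∏ k : Fin d, Λ k.val (j k) ^ τ :=
    Finset.sum_le_sum_of_subset_of_nonneg hFsub
      (fun j _ _ => Finset.prod_nonneg fun k _ => Real.rpow_nonneg (hP.nonneg _ _) τ)
  have step3 : ∑ j ∈ T, ∏ k : Fin d, Λ k.val (j k) ^ τ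
      = ∏ k : Fin d, ∑ m ∈ Finset.range (N k), Λ k.val m ^ τ := by
    rw [hT, Finset.prod_univ_sum]
  have step4 : ∏ k : Fin d, ∑ m ∈ Finset.range (N k), Λ k.val m ^ τ
      ≤ (1 + ∑' j : ℕ, (Λ 0 (j + 1) / Λ 0 1) ^ τ) ^ d := by
    have h := Finset.prod_le_prod (s := Finset.univ)
      (f := fun k : Fin d => ∑ m ∈ Finset.range (N k), Λ k.val m ^ τ)
      (g := fun _ : Fin d => 1 + ∑' j : ℕ, (Λ 0 (j + 1) / Λ 0 1) ^ τ)
      (fun k _ => Finset.sum_nonneg fun m _ => Real.rpow_nonneg (hP.nonneg _ _) τ)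
      (fun k _ => finsum_le hP hτ k.val _)
    simpa [Finset.prod_const] using h
  rw [hcard]
  calc (F.card : ℝ) * (ε^2)^τ ≤ ∑ j ∈ F, ∏ k : Fin d, Λ k.val (j k) ^ τ := step1
    _ ≤ _ := step2.trans (step3.le.trans step4)
end

section
variable {Λ : ℕ → ℕ → ℝ} {τ : ℝ}

lemma log_count_bound (hP : PropertyP Λ) (hτ : Cond3 Λ τ)
    (d : ℕ) {ε : ℝ} (hε : ε ∈ Set.Ioo (0:ℝ) 1) :
    Real.log (infoCount Λ d ε)
      ≤ 2*τ*Real.log ε⁻¹ + d * Real.log (1 + ∑' j : ℕ, (Λ 0 (j + 1) / Λ 0 1) ^ τ) := by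
  obtain ⟨hε0, hε1⟩ := hε
  set S₀ := ∑' j : ℕ, (Λ 0 (j + 1) / Λ 0 1) ^ τ with hS₀
  have hS₀0 : 0 ≤ S₀ :=
    tsum_nonneg fun j => Real.rpow_nonneg (div_nonneg (hP.nonneg 0 (j+1)) (hP.second_pos 0).le) τ
  have hlogA : 0 ≤ Real.log (1 + S₀) := Real.log_nonneg (by linarith)
  have hlogε : 0 < Real.log ε⁻¹ := Real.log_pos (one_lt_inv_iff₀.mpr ⟨hε0, hε1⟩)
  rcases Nat.eq_zero_or_pos (infoCount Λ d ε) with h0 | hpos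
  · rw [h0]
    simp only [Nat.cast_zero, Real.log_zero]
    have : 0 ≤ (d:ℝ) * Real.log (1 + S₀) := by positivity
    nlinarith [hτ.1]
  · have hc : (0:ℝ) < (ε^2)^τ := Real.rpow_pos_of_pos (by positivity) τ
    have hb := count_bound hP hτ d ⟨hε0, hε1⟩
    have hineq : (infoCount Λ d ε : ℝ) ≤ (1 + S₀)^d * ((ε^2)^τ)⁻¹ := by
      rw [← le_div_iff₀ hc] at hb
      exact hb.trans_eq (div_eq_mul_inv _ _)
    have hnpos : (0:ℝ) < (infoCount Λ d ε : ℝ) := by exact_mod_cast hpos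
    have hlog := Real.log_le_log hnpos hineq
    rw [Real.log_mul (by positivity) (by positivity), Real.log_pow, Real.log_inv,
      Real.log_rpow (by positivity : (0:ℝ) < ε^2), Real.log_pow] at hlog
    have h2 : Real.log ε⁻¹ = - Real.log ε := Real.log_inv ε
    push_cast at hlog ⊢
    rw [h2]
    linarith [hlog]
end

lemma wt_mem : ∀ᶠ p in wtFilter, p.1 ∈ Set.Ioo (0:ℝ) 1 ∧ 1 ≤ p.2 :=
  le_principal_iff.mp inf_le_right

lemma denom_tendsto {s t : ℝ} (hs : 0 < s) (ht : 0 < t) :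
    Filter.Tendsto (fun p : ℝ × ℕ => p.1 ^ (-s) + (p.2:ℝ) ^ t) wtFilter Filter.atTop := by
  rw [Filter.tendsto_atTop]
  intro R
  set B := max R 1 with hB
  have hB1 : (1:ℝ) ≤ B := le_max_right R 1
  set Mx := max (B ^ (1/s)) (B ^ (1/t)) with hMx
  have hMx0 : 0 < Mx := lt_of_lt_of_le (Real.rpow_pos_of_pos (by linarith) (1/s)) (le_max_left _ _)
  have hf : Filter.Tendsto (fun p : ℝ × ℕ => p.1⁻¹ + (p.2:ℝ)) wtFilter Filter.atTop :=
    Filter.tendsto_comap.mono_left inf_le_left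
  filter_upwards [hf.eventually_ge_atTop (2*Mx), wt_mem] with p hp hmem2
  obtain ⟨⟨hε0, hε1⟩, hd1⟩ := hmem2
  have hεinv : (1:ℝ) < p.1⁻¹ := one_lt_inv_iff₀.mpr ⟨hε0, hε1⟩
  have hd0 : (1:ℝ) ≤ (p.2:ℝ) := by exact_mod_cast hd1
  have hterm1 : 0 < p.1 ^ (-s) := Real.rpow_pos_of_pos hε0 _
  have hterm2 : (0:ℝ) ≤ (p.2:ℝ) ^ t := Real.rpow_nonneg (by linarith) t
  rcases le_or_gt Mx p.1⁻¹ with h | h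
  · have key : B ≤ p.1 ^ (-s) := by
      have e1 : p.1 ^ (-s) = (p.1⁻¹) ^ s := by
        rw [Real.rpow_neg hε0.le, ← Real.inv_rpow hε0.le]
      have e2 : (B ^ (1/s)) ^ s ≤ (p.1⁻¹) ^ s :=
        Real.rpow_le_rpow (by positivity) (le_trans (le_max_left _ _) h) hs.le
      have e3 : (B ^ (1/s)) ^ s = B := by
        rw [← Real.rpow_mul (by linarith), one_div_mul_cancel hs.ne', Real.rpow_one]
      rw [e1, ← e3]; exact e2
    have : R ≤ B := le_max_left R 1
    linarith
  · have hdM : Mx ≤ (p.2:ℝ) := by linarith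
    have key : B ≤ (p.2:ℝ) ^ t := by
      have e2 : (B ^ (1/t)) ^ t ≤ ((p.2:ℝ)) ^ t :=
        Real.rpow_le_rpow (by positivity) (le_trans (le_max_right _ _) hdM) ht.le
      have e3 : (B ^ (1/t)) ^ t = B := by
        rw [← Real.rpow_mul (by linarith), one_div_mul_cancel ht.ne', Real.rpow_one]
      rw [← e3]; exact e2
    have : R ≤ B := le_max_left R 1
    linarith

set_option maxHeartbeats 1000000 in
/-- Under Property (P), the problem is `(s,t)`-weakly tractable for every `s > 0`
and every `t > 1`. -/
theorem stwt_of_propertyP (Λ : ℕ → ℕ → ℝ) (hP : PropertyP Λ) :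
    ∀ s t : ℝ, 0 < s → 1 < t → IsWT Λ s t := by
  obtain ⟨τ, hτ⟩ := hP.cond3
  intro s t hs ht
  have hτ0 : 0 < τ := hτ.1
  have ht0 : (0:ℝ) < t := lt_trans one_pos ht
  set S₀ := ∑' j : ℕ, (Λ 0 (j + 1) / Λ 0 1) ^ τ with hS₀
  have hS₀0 : 0 ≤ S₀ :=
    tsum_nonneg fun j => Real.rpow_nonneg (div_nonneg (hP.nonneg 0 (j+1)) (hP.second_pos 0).le) τ
  set Cc := Real.log (1 + S₀) with hCc
  have hC0 : 0 ≤ Cc := Real.log_nonneg (by linarith)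
  rw [IsWT, NormedAddCommGroup.tendsto_nhds_zero]
  intro δ hδ
  obtain ⟨K₁, hK₁0, hK₁⟩ := auxLogB (δ/(2*(2*τ+1))) s (div_pos hδ (by nlinarith)) hs
  obtain ⟨K₂, hK₂0, hK₂⟩ := auxPolyB (δ/(2*(Cc+1))) t (div_pos hδ (by nlinarith)) ht
  set M := 2*τ*K₁ + Cc*K₂ with hM
  have hM0 : 0 ≤ M := by nlinarith [mul_nonneg hC0 hK₂0, mul_nonneg hτ0.le hK₁0]
  filter_upwards [(denom_tendsto hs ht0).eventually_ge_atTop (2*M/δ + 1), wt_mem]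
    with p hD hmem
  obtain ⟨⟨hε0, hε1⟩, hd1⟩ := hmem
  have hlogn := log_count_bound hP hτ p.2 ⟨hε0, hε1⟩
  rw [← hS₀, ← hCc] at hlogn
  set n := infoCount Λ p.2 p.1 with hn
  set D := p.1 ^ (-s) + (p.2:ℝ) ^ t with hDdef
  have hterm1 : 0 < p.1 ^ (-s) := Real.rpow_pos_of_pos hε0 _
  have hterm2 : (0:ℝ) ≤ (p.2:ℝ) ^ t := Real.rpow_nonneg (Nat.cast_nonneg _) t
  have hDpos : 0 < D := by rw [hDdef]; linarith
  have hεinv1 : (1:ℝ) ≤ p.1⁻¹ := (one_lt_inv_iff₀.mpr ⟨hε0, hε1⟩).le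
  have hlogn0 : 0 ≤ Real.log n := Real.log_natCast_nonneg n
  clear_value S₀ Cc n D
  have h1 : Real.log p.1⁻¹ ≤ K₁ + (δ/(2*(2*τ+1))) * p.1 ^ (-s) := by
    have h := hK₁ p.1⁻¹ hεinv1
    have e1 : (p.1⁻¹) ^ s = p.1 ^ (-s) := by
      rw [Real.rpow_neg hε0.le, ← Real.inv_rpow hε0.le]
    rwa [e1] at h
  have h2 : (p.2:ℝ) ≤ K₂ + (δ/(2*(Cc+1))) * (p.2:ℝ)^t :=
    hK₂ _ (by exact_mod_cast hd1)
  have e1 : 2*τ*Real.log p.1⁻¹ ≤ 2*τ*K₁ + (δ/2) * p.1 ^ (-s) := by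
    have ha := mul_le_mul_of_nonneg_left h1 (by nlinarith : (0:ℝ) ≤ 2*τ)
    have hb : 2*τ*((δ/(2*(2*τ+1))) * p.1 ^ (-s)) ≤ (δ/2) * p.1 ^ (-s) := by
      rw [← mul_assoc]
      apply mul_le_mul_of_nonneg_right _ hterm1.le
      rw [mul_div_assoc', div_le_div_iff₀ (by nlinarith) two_pos]
      nlinarith [mul_nonneg hδ.le hτ0.le]
    linarith [ha, hb]
  have e2 : Cc*(p.2:ℝ) ≤ Cc*K₂ + (δ/2) * (p.2:ℝ)^t := by
    have ha := mul_le_mul_of_nonneg_left h2 hC0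
    have hb : Cc*((δ/(2*(Cc+1))) * (p.2:ℝ)^t) ≤ (δ/2) * (p.2:ℝ)^t := by
      rw [← mul_assoc]
      apply mul_le_mul_of_nonneg_right _ hterm2
      rw [mul_div_assoc', div_le_div_iff₀ (by nlinarith) two_pos]
      nlinarith [mul_nonneg hδ.le hC0]
    linarith [ha, hb]
  have hnum : Real.log n ≤ M + (δ/2) * D := by
    rw [hDdef, hM]
    linarith [hlogn, e1, e2]
  have hq : Real.log n / D < δ := by
    rw [div_lt_iff₀ hDpos]
    have hM2 : M < δ/2 * D := by
      have h3 : δ/2 * (2*M/δ + 1) = M + δ/2 := by field_simp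
      nlinarith [mul_le_mul_of_nonneg_left hD (le_of_lt (half_pos hδ))]
    linarith [hnum, hM2]
  rw [Real.norm_eq_abs, abs_of_nonneg (div_nonneg hlogn0 hDpos.le)]
  exact hq
end

section
/- Fix t > 0. Suppose there exists τ > 0 such that the sums ∑_{j=1}^∞ (λ_{d,j}/λ_{d,1})^τ are finite and lim_{d→∞} d^{-t} · ln(∑_{j=1}^∞ (λ_{d,j}/λ_{d,1})^τ) = 0. Then for every s > 0, ln n(ε,d)/(ε^{-s}+d^t) → 0 as ε^{-1}+d → ∞; that is, the problem is (s,t)-weakly tractable for every s > 0 for the normalized error criterion. -/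
open Filter Real Set

lemma count_log_bound (μ : ℕ → ℕ → ℝ) (d : ℕ) (τ : ℝ) (hτ : 0 < τ)
    (hnn : ∀ j : ℕ, 0 ≤ μ d j) (hpos : 0 < μ d 0)
    (hsum : Summable fun j : ℕ => (μ d j / μ d 0) ^ τ)
    (ε : ℝ) (hε : ε ∈ Set.Ioo (0 : ℝ) 1) :
    Real.log ((sInf {n : ℕ | μ d n ≤ ε ^ 2 * μ d 0} : ℕ) : ℝ) ≤
      2 * τ * Real.log ε⁻¹ + Real.log (∑' j : ℕ, (μ d j / μ d 0) ^ τ) := by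
  obtain ⟨hε0, hε1⟩ := hε
  set S := ∑' j : ℕ, (μ d j / μ d 0) ^ τ with hS
  have hS1 : (1 : ℝ) ≤ S := by
    have := Summable.le_tsum hsum 0 (fun j _ => Real.rpow_nonneg (div_nonneg (hnn j) hpos.le) τ)
    rwa [div_self hpos.ne', Real.one_rpow] at this
  have hlogS : 0 ≤ Real.log S := Real.log_nonneg hS1
  have hεinv : (1 : ℝ) ≤ ε⁻¹ := (one_le_inv_iff₀).mpr ⟨hε0, hε1.le⟩
  have hlogε : 0 ≤ Real.log ε⁻¹ := Real.log_nonneg hεinv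
  set n := sInf {n : ℕ | μ d n ≤ ε ^ 2 * μ d 0} with hn
  rcases Nat.eq_zero_or_pos n with h0 | hn1
  · rw [h0]
    simp only [Nat.cast_zero, Real.log_zero]
    positivity
  -- key: for m < n, ε² μd0 < μ d m
  have hc : 0 < (ε ^ 2) ^ τ := Real.rpow_pos_of_pos (by positivity) τ
  have key : (n : ℝ) * (ε ^ 2) ^ τ ≤ S := by
    have h1 : ∀ m ∈ Finset.range n, (ε ^ 2) ^ τ ≤ (μ d m / μ d 0) ^ τ := by
      intro m hm
      have hmlt : m < n := Finset.mem_range.mp hm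
      have := Nat.notMem_of_lt_sInf (hn ▸ hmlt)
      have hgt : ε ^ 2 * μ d 0 < μ d m := lt_of_not_ge this
      have : ε ^ 2 < μ d m / μ d 0 := (lt_div_iff₀ hpos).mpr hgt
      exact Real.rpow_le_rpow (by positivity) this.le hτ.le
    calc (n : ℝ) * (ε ^ 2) ^ τ = ∑ _m ∈ Finset.range n, (ε ^ 2) ^ τ := by
          simp [mul_comm]
      _ ≤ ∑ m ∈ Finset.range n, (μ d m / μ d 0) ^ τ := Finset.sum_le_sum h1
      _ ≤ S := Summable.sum_le_tsum _ (fun j _ => Real.rpow_nonneg (div_nonneg (hnn j) hpos.le) τ) hsum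
  have hnle : (n : ℝ) ≤ S / (ε ^ 2) ^ τ := (le_div_iff₀ hc).mpr key
  have hnpos : (0 : ℝ) < n := by exact_mod_cast hn1
  calc Real.log (n : ℝ) ≤ Real.log (S / (ε ^ 2) ^ τ) := Real.log_le_log hnpos hnle
    _ = Real.log S - τ * Real.log (ε ^ 2) := by
        rw [Real.log_div (by linarith) hc.ne', Real.log_rpow (by positivity)]
    _ = Real.log S - τ * (2 * Real.log ε) := by rw [Real.log_pow]; norm_num
    _ = 2 * τ * Real.log ε⁻¹ + Real.log S := by rw [Real.log_inv]; ring

lemma wtFilter_eq' : wtFilter =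
    (Filter.comap (fun p : ℝ × ℕ => p.1⁻¹ + (p.2 : ℝ)) Filter.atTop) ⊓
      Filter.principal {p : ℝ × ℕ | p.1 ∈ Set.Ioo (0 : ℝ) 1 ∧ 1 ≤ p.2} := rfl

/-- Lemma 2.5: Fix `t > 0`. If there is `τ > 0` such that the sums
`∑_j (λ_{d,j}/λ_{d,1})^τ` are finite and `d^{-t} ln(∑_j (λ_{d,j}/λ_{d,1})^τ) → 0`,
then for every `s > 0`, `ln n(ε,d)/(ε^{-s}+d^t) → 0` as `ε⁻¹ + d → ∞`, where
`n(ε,d) = min{n ≥ 0 : λ_{d,n+1} ≤ ε² λ_{d,1}}` (here `μ d j = λ_{d,j+1}`, 0-indexed in `j`). -/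
theorem stwt_of_sum_condition (μ : ℕ → ℕ → ℝ) (t : ℝ) (ht : 0 < t)
    (hnn : ∀ d : ℕ, 1 ≤ d → ∀ j : ℕ, 0 ≤ μ d j)
    (hanti : ∀ d : ℕ, 1 ≤ d → Antitone (μ d))
    (hpos : ∀ d : ℕ, 1 ≤ d → 0 < μ d 0)
    (τ : ℝ) (hτ : 0 < τ)
    (hsum : ∀ d : ℕ, 1 ≤ d → Summable fun j : ℕ => (μ d j / μ d 0) ^ τ)
    (hlim : Filter.Tendsto
      (fun d : ℕ => (d : ℝ) ^ (-t) * Real.log (∑' j : ℕ, (μ d j / μ d 0) ^ τ))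
      Filter.atTop (nhds 0)) :
    ∀ s : ℝ, 0 < s →
      Filter.Tendsto
        (fun p : ℝ × ℕ =>
          Real.log ((sInf {n : ℕ | μ p.2 n ≤ p.1 ^ 2 * μ p.2 0} : ℕ) : ℝ) /
            (p.1 ^ (-s) + (p.2 : ℝ) ^ t))
        wtFilter (nhds 0) := by
  intro s hs
  set L : ℕ → ℝ := fun d => Real.log (∑' j : ℕ, (μ d j / μ d 0) ^ τ) with hLdef
  have hLnn : ∀ d : ℕ, 1 ≤ d → 0 ≤ L d := by
    intro d hd
    apply Real.log_nonneg
    have := Summable.le_tsum (hsum d hd) 0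
      (fun j _ => Real.rpow_nonneg (div_nonneg (hnn d hd j) (hpos d hd).le) τ)
    rwa [div_self (hpos d hd).ne', Real.one_rpow] at this
  rw [Metric.tendsto_nhds]
  intro η hη
  have hη4 : 0 < η / 4 := by positivity
  -- (1) log x / x^s smallness
  have t1 : Tendsto (fun x : ℝ => 2 * τ * (Real.log x / x ^ s)) atTop (nhds 0) := by
    simpa using ((isLittleO_log_rpow_atTop hs).tendsto_div_nhds_zero).const_mul (2 * τ)
  obtain ⟨M₀, hM₀⟩ := (eventually_atTop.mp (t1.eventually (gt_mem_nhds hη4)))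
  set M : ℝ := max M₀ 1 with hMdef
  have hM1 : (1 : ℝ) ≤ M := le_max_right _ _
  have hM : ∀ x : ℝ, M ≤ x → 2 * τ * (Real.log x / x ^ s) < η / 4 :=
    fun x hx => hM₀ x (le_trans (le_max_left _ _) hx)
  -- (2) L d / d^t smallness
  obtain ⟨D₀, hD₀⟩ := eventually_atTop.mp (hlim.eventually (gt_mem_nhds hη4))
  set D₁ : ℕ := max D₀ 1 with hD₁def
  have hD₁ : ∀ d : ℕ, D₁ ≤ d → (d : ℝ) ^ (-t) * L d < η / 4 :=
    fun d hd => hD₀ d (le_trans (le_max_left _ _) hd)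
  -- (3) bound on L d for d < D₁
  set B : ℝ := ∑ d ∈ Finset.range D₁, |L d| with hBdef
  have hB : ∀ d : ℕ, d < D₁ → L d ≤ B := by
    intro d hd
    calc L d ≤ |L d| := le_abs_self _
      _ ≤ B := Finset.single_le_sum (f := fun d => |L d|)
          (fun i _ => abs_nonneg _) (Finset.mem_range.mpr hd)
  -- (4) B / x^s smallness
  have t4 : Tendsto (fun x : ℝ => B * (x ^ s)⁻¹) atTop (nhds 0) := by
    simpa using ((tendsto_rpow_atTop hs).inv_tendsto_atTop).const_mul B
  obtain ⟨M₂', hM₂'⟩ := eventually_atTop.mp (t4.eventually (gt_mem_nhds hη4))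
  set M₂ : ℝ := max M₂' M with hM₂def
  have hM₂ : ∀ x : ℝ, M₂ ≤ x → B * (x ^ s)⁻¹ < η / 4 :=
    fun x hx => hM₂' x (le_trans (le_max_left _ _) hx)
  -- (5) 2τ log M / d^t smallness
  have t5 : Tendsto (fun d : ℕ => 2 * τ * Real.log M * (((d : ℝ)) ^ t)⁻¹) atTop (nhds 0) := by
    simpa using (((tendsto_rpow_atTop ht).comp
      tendsto_natCast_atTop_atTop).inv_tendsto_atTop).const_mul (2 * τ * Real.log M)
  obtain ⟨D₂', hD₂'⟩ := eventually_atTop.mp (t5.eventually (gt_mem_nhds hη4))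
  set D₂ : ℕ := max D₂' D₁ with hD₂def
  have hD₂ : ∀ d : ℕ, D₂ ≤ d → 2 * τ * Real.log M * (((d : ℝ)) ^ t)⁻¹ < η / 4 :=
    fun d hd => hD₂' d (le_trans (le_max_left _ _) hd)
  set N : ℝ := M₂ + (D₂ : ℝ) + 1 with hNdef
  -- eventual facts on the filter
  have hev1 : ∀ᶠ p : ℝ × ℕ in wtFilter, N ≤ p.1⁻¹ + (p.2 : ℝ) := by
    have h := Filter.tendsto_comap (f := fun p : ℝ × ℕ => p.1⁻¹ + (p.2 : ℝ))
      (x := (atTop : Filter ℝ))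
    exact (h.eventually (eventually_ge_atTop N)).filter_mono (wtFilter_eq' ▸ inf_le_left)
  have hev2 : ∀ᶠ p : ℝ × ℕ in wtFilter, p.1 ∈ Set.Ioo (0 : ℝ) 1 ∧ 1 ≤ p.2 :=
    Filter.Eventually.filter_mono (wtFilter_eq' ▸ inf_le_right)
      (Filter.eventually_principal.mpr fun x hx => hx)
  filter_upwards [hev1, hev2] with p hN hp
  obtain ⟨hpε, hpd⟩ := hp
  obtain ⟨hε0, hε1⟩ := hpε
  set ε : ℝ := p.1
  set d : ℕ := p.2
  have hεinv1 : (1 : ℝ) ≤ ε⁻¹ := (one_le_inv_iff₀).mpr ⟨hε0, hε1.le⟩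
  have hlogεnn : 0 ≤ Real.log ε⁻¹ := Real.log_nonneg hεinv1
  have hd1 : (1 : ℝ) ≤ (d : ℝ) := by exact_mod_cast hpd
  have hdt1 : (1 : ℝ) ≤ (d : ℝ) ^ t := Real.one_le_rpow hd1 ht.le
  have hdtpos : (0 : ℝ) < (d : ℝ) ^ t := lt_of_lt_of_le one_pos hdt1
  have hεspos : (0 : ℝ) < ε ^ (-s) := Real.rpow_pos_of_pos hε0 _
  have hεs_eq : ε ^ (-s) = (ε⁻¹) ^ s := by
    rw [Real.rpow_neg hε0.le, ← Real.inv_rpow hε0.le]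
  set den : ℝ := ε ^ (-s) + (d : ℝ) ^ t with hden
  have hdenpos : 0 < den := by positivity
  -- nonnegativity of log of the nat
  set n : ℕ := sInf {n : ℕ | μ d n ≤ ε ^ 2 * μ d 0} with hndef
  have hlognn : 0 ≤ Real.log (n : ℝ) := by
    rcases Nat.eq_zero_or_pos n with h0 | h1
    · rw [h0]; simp
    · exact Real.log_nonneg (by exact_mod_cast h1)
  rw [Real.dist_eq, sub_zero, abs_of_nonneg (div_nonneg hlognn hdenpos.le)]
  -- main bound
  have hbound : Real.log (n : ℝ) ≤ 2 * τ * Real.log ε⁻¹ + L d :=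
    count_log_bound μ d τ hτ (hnn d hpd) (hpos d hpd) (hsum d hpd) ε ⟨hε0, hε1⟩
  have hsplit : Real.log (n : ℝ) / den ≤
      2 * τ * Real.log ε⁻¹ / den + L d / den := by
    rw [← add_div]
    exact div_le_div_of_nonneg_right hbound hdenpos.le |>.trans_eq rfl
  refine lt_of_le_of_lt hsplit ?_
  have hterm1 : 2 * τ * Real.log ε⁻¹ / den < η / 4 := by
    by_cases hx : M ≤ ε⁻¹
    · have h1 : 2 * τ * Real.log ε⁻¹ / den ≤ 2 * τ * Real.log ε⁻¹ / ε ^ (-s) :=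
        div_le_div_of_nonneg_left (by positivity) hεspos (le_add_of_nonneg_right hdtpos.le)
      refine lt_of_le_of_lt h1 ?_
      rw [hεs_eq, div_eq_mul_inv, mul_assoc, ← div_eq_mul_inv] at *
      exact hM ε⁻¹ hx
    · push_neg at hx
      have hdD₂ : (D₂ : ℝ) < (d : ℝ) := by
        have hMM₂ : M ≤ M₂ := le_max_right _ _
        simp only [hNdef] at hN
        linarith
      have hdD₂' : D₂ ≤ d := by exact_mod_cast hdD₂.le
      have h1 : 2 * τ * Real.log ε⁻¹ / den ≤ 2 * τ * Real.log ε⁻¹ / (d : ℝ) ^ t :=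
        div_le_div_of_nonneg_left (by positivity) hdtpos (le_add_of_nonneg_left hεspos.le)
      have h2 : 2 * τ * Real.log ε⁻¹ / (d : ℝ) ^ t ≤ 2 * τ * Real.log M / (d : ℝ) ^ t := by
        apply div_le_div_of_nonneg_right _ hdtpos.le |>.trans_eq rfl
        have := Real.log_le_log (lt_of_lt_of_le one_pos hεinv1) hx.le
        nlinarith
      refine lt_of_le_of_lt (h1.trans h2) ?_
      rw [div_eq_mul_inv]
      exact hD₂ d hdD₂'
  have hterm2 : L d / den < η / 4 := by
    by_cases hd : D₁ ≤ d
    · have h1 : L d / den ≤ L d / (d : ℝ) ^ t :=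
        div_le_div_of_nonneg_left (hLnn d hpd) hdtpos (le_add_of_nonneg_left hεspos.le)
      refine lt_of_le_of_lt h1 ?_
      have := hD₁ d hd
      rwa [Real.rpow_neg (Nat.cast_nonneg d), ← div_eq_inv_mul] at this
    · push_neg at hd
      have hεM₂ : M₂ ≤ ε⁻¹ := by
        have hdD : (d : ℝ) ≤ (D₂ : ℝ) := by
          exact_mod_cast Nat.cast_le.mpr (le_of_lt (lt_of_lt_of_le hd (le_max_right _ _)))
        simp only [hNdef] at hN
        linarith
      have h1 : L d / den ≤ L d / ε ^ (-s) :=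
        div_le_div_of_nonneg_left (hLnn d hpd) hεspos (le_add_of_nonneg_right hdtpos.le)
      have h2 : L d / ε ^ (-s) ≤ B / ε ^ (-s) :=
        div_le_div_of_nonneg_right (hB d hd) hεspos.le |>.trans_eq rfl
      refine lt_of_le_of_lt (h1.trans h2) ?_
      rw [hεs_eq, div_eq_mul_inv]
      exact hM₂ ε⁻¹ hεM₂
  linarith
end
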